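/- Let G : [0,∞) → [0,∞) be convex and strictly increasing with G(0) = 0, let 0 < Δ₁ ≤ Δ₂, and let u, t₁, …, t_k be real numbers all lying in the interval [Δ₁, Δ₂]. Then G(u)/(Σᵢ₌₁ᵏ G(tᵢ) + G(u)) ≤ Δ · u/(Σᵢ₌₁ᵏ tᵢ + u), where Δ = (G(Δ₂)·Δ₁)/(G(Δ₁)·Δ₂). -/

import Mathlib

/-- Upper bound: for `0 ≤ s ≤ b`, `G s ≤ (s / b) * G b`. -/
lemma orlicz_upper (G : ℝ → ℝ) (hGconv : ConvexOn ℝ (Set.Ici 0) G)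
    (hG0 : G 0 = 0) {s b : ℝ} (hs : 0 ≤ s) (hb : 0 < b) (hsb : s ≤ b) :
    G s ≤ s / b * G b := by
  have hl : 0 ≤ s / b := div_nonneg hs hb.le
  have hl1 : s / b ≤ 1 := div_le_one_of_le₀ hsb hb.le
  have := hGconv.2 (Set.self_mem_Ici) (Set.mem_Ici.mpr hb.le)
    (by linarith : (0:ℝ) ≤ 1 - s / b) hl (by ring)
  have hcomb : (1 - s / b) • (0:ℝ) + (s / b) • b = s := by
    rw [smul_eq_mul, smul_eq_mul]
    field_simp
    ring
  rw [hcomb] at this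
  simpa [hG0, smul_eq_mul] using this

/-- Lower bound: for `0 < a ≤ s`, `(s / a) * G a ≤ G s`. -/
lemma orlicz_lower (G : ℝ → ℝ) (hGconv : ConvexOn ℝ (Set.Ici 0) G)
    (hG0 : G 0 = 0) {s a : ℝ} (ha : 0 < a) (has : a ≤ s) :
    s / a * G a ≤ G s := by
  have hs : 0 < s := ha.trans_le has
  have h := orlicz_upper G hGconv hG0 ha.le hs has
  calc s / a * G a ≤ s / a * (a / s * G s) := by
        exact mul_le_mul_of_nonneg_left h (div_nonneg hs.le ha.le)
    _ = G s := by field_simp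

/-- Key inequality for online sensitivity sampling for Orlicz norms: for an Orlicz
function `G`, `0 < Δ₁ ≤ Δ₂`, and `u, t₁, …, t_k ∈ [Δ₁, Δ₂]`,
`G u / (∑ i, G (t i) + G u) ≤ Δ · u / (∑ i, t i + u)` where
`Δ = (G Δ₂ · Δ₁) / (G Δ₁ · Δ₂)`. -/
theorem orlicz_sensitivity_bound (G : ℝ → ℝ)
    (hGconv : ConvexOn ℝ (Set.Ici 0) G)
    (hGmono : StrictMonoOn G (Set.Ici 0))
    (hG0 : G 0 = 0)
    (hGnn : ∀ t, 0 ≤ t → 0 ≤ G t)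
    (Δ₁ Δ₂ : ℝ) (hΔ₁ : 0 < Δ₁) (hΔ : Δ₁ ≤ Δ₂)
    (k : ℕ) (t : Fin k → ℝ) (u : ℝ)
    (hu : u ∈ Set.Icc Δ₁ Δ₂) (ht : ∀ i, t i ∈ Set.Icc Δ₁ Δ₂) :
    G u / (∑ i, G (t i) + G u) ≤
      (G Δ₂ * Δ₁) / (G Δ₁ * Δ₂) * (u / (∑ i, t i + u)) := by
  obtain ⟨hu1, hu2⟩ := hu
  have hΔ₂ : 0 < Δ₂ := hΔ₁.trans_le hΔ
  have hGΔ₁ : 0 < G Δ₁ := by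
    have := hGmono (Set.self_mem_Ici) (Set.mem_Ici.mpr hΔ₁.le) hΔ₁
    simpa [hG0] using this
  have hGΔ₂ : 0 < G Δ₂ := lt_of_lt_of_le hGΔ₁
    (hGmono.monotoneOn (Set.mem_Ici.mpr hΔ₁.le) (Set.mem_Ici.mpr hΔ₂.le) hΔ)
  have hupos : 0 < u := hΔ₁.trans_le hu1
  -- numerator bound
  have hnum : G u ≤ G Δ₂ / Δ₂ * u := by
    have := orlicz_upper G hGconv hG0 hupos.le hΔ₂ hu2
    calc G u ≤ u / Δ₂ * G Δ₂ := this
      _ = G Δ₂ / Δ₂ * u := by ring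
  -- denominator bound
  have hti : ∀ i, G Δ₁ / Δ₁ * t i ≤ G (t i) := by
    intro i
    have := orlicz_lower G hGconv hG0 hΔ₁ (ht i).1
    calc G Δ₁ / Δ₁ * t i = t i / Δ₁ * G Δ₁ := by ring
      _ ≤ G (t i) := this
  have hu' : G Δ₁ / Δ₁ * u ≤ G u := by
    have := orlicz_lower G hGconv hG0 hΔ₁ hu1
    calc G Δ₁ / Δ₁ * u = u / Δ₁ * G Δ₁ := by ring
      _ ≤ G u := this
  have hSpos : 0 < ∑ i, t i + u := by
    have : 0 ≤ ∑ i, t i := Finset.sum_nonneg fun i _ =>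
      (hΔ₁.trans_le (ht i).1).le
    linarith
  have hden : G Δ₁ / Δ₁ * (∑ i, t i + u) ≤ ∑ i, G (t i) + G u := by
    have hsum : G Δ₁ / Δ₁ * ∑ i, t i ≤ ∑ i, G (t i) := by
      rw [Finset.mul_sum]
      exact Finset.sum_le_sum fun i _ => hti i
    calc G Δ₁ / Δ₁ * (∑ i, t i + u)
        = G Δ₁ / Δ₁ * ∑ i, t i + G Δ₁ / Δ₁ * u := by ring
      _ ≤ ∑ i, G (t i) + G u := add_le_add hsum hu'
  have hdenpos : 0 < G Δ₁ / Δ₁ * (∑ i, t i + u) :=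
    mul_pos (div_pos hGΔ₁ hΔ₁) hSpos
  have hGden : 0 < ∑ i, G (t i) + G u := hdenpos.trans_le hden
  have key : G u / (∑ i, G (t i) + G u) ≤
      (G Δ₂ / Δ₂ * u) / (G Δ₁ / Δ₁ * (∑ i, t i + u)) :=
    div_le_div₀ (mul_nonneg (div_nonneg hGΔ₂.le hΔ₂.le) hupos.le) hnum hdenpos hden
  calc G u / (∑ i, G (t i) + G u)
      ≤ (G Δ₂ / Δ₂ * u) / (G Δ₁ / Δ₁ * (∑ i, t i + u)) := key
    _ = (G Δ₂ * Δ₁) / (G Δ₁ * Δ₂) * (u / (∑ i, t i + u)) := by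
        field_simp
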